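/- Let u₁, u₂, p₁, p₂ ∈ ℝ with u₁ ≠ u₂, u₁ ≠ 0, u₂ ≠ 0 and p₁u₂ − p₂u₁ ≠ 0. Define a = p₁²/(u₁−u₂) + p₂²/(u₂−u₁) − u₁² − u₁u₂ − u₂², b = u₂p₁²/(u₂−u₁) + u₁p₂²/(u₁−u₂) + (u₁+u₂)u₁u₂, and the parabola coefficients b₁ = (p₁u₂ − p₂u₁)/(u₁u₂(u₁−u₂)), b₀ = −(p₁u₂² − p₂u₁²)/(u₁u₂(u₁−u₂)). Then the Abel polynomial factorizes identically as a polynomial in x: x³ + a·x + b − (x(b₁x + b₀))² = −b₁²·(x − u₁)(x − u₂)·(x² + S·x + P), where S = (u₁−u₂)(p₁²u₂² − p₂²u₁² − (u₁−u₂)u₁²u₂²)/(p₁u₂ − p₂u₁)² and P = u₁u₂(u₁−u₂)(p₁²u₂ − p₂²u₁ − u₁³u₂ + u₁u₂³)/(p₁u₂ − p₂u₁)². -/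

import Mathlib

/-- Factorization of the Abel polynomial: the quartic
`x³ + a·x + b − (x(b₁x + b₀))²` vanishes at the abscissas `u₁`, `u₂` of the two
given intersection points, and the remaining quadratic factor `x² + S·x + P`
carries the abscissas of the other two movable intersection points of the
parabola `y = x(b₁x + b₀)` with the cubic. -/
theorem abel_polynomial_factorization (u₁ u₂ p₁ p₂ : ℝ)
    (h : u₁ ≠ u₂) (h₁ : u₁ ≠ 0) (h₂ : u₂ ≠ 0) (hD : p₁ * u₂ - p₂ * u₁ ≠ 0) :
    let a := p₁ ^ 2 / (u₁ - u₂) + p₂ ^ 2 / (u₂ - u₁) - u₁ ^ 2 - u₁ * u₂ - u₂ ^ 2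
    let b := u₂ * p₁ ^ 2 / (u₂ - u₁) + u₁ * p₂ ^ 2 / (u₁ - u₂) + (u₁ + u₂) * u₁ * u₂
    let b₁ := (p₁ * u₂ - p₂ * u₁) / (u₁ * u₂ * (u₁ - u₂))
    let b₀ := -(p₁ * u₂ ^ 2 - p₂ * u₁ ^ 2) / (u₁ * u₂ * (u₁ - u₂))
    let S := (u₁ - u₂) * (p₁ ^ 2 * u₂ ^ 2 - p₂ ^ 2 * u₁ ^ 2
      - (u₁ - u₂) * u₁ ^ 2 * u₂ ^ 2) / (p₁ * u₂ - p₂ * u₁) ^ 2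
    let P := u₁ * u₂ * (u₁ - u₂) * (p₁ ^ 2 * u₂ - p₂ ^ 2 * u₁
      - u₁ ^ 3 * u₂ + u₁ * u₂ ^ 3) / (p₁ * u₂ - p₂ * u₁) ^ 2
    ∀ x : ℝ, x ^ 3 + a * x + b - (x * (b₁ * x + b₀)) ^ 2 =
      -b₁ ^ 2 * (x - u₁) * (x - u₂) * (x ^ 2 + S * x + P) := by
  intro a b b₁ b₀ S P x
  have hne : u₁ - u₂ ≠ 0 := sub_ne_zero.mpr h
  have hne' : u₂ - u₁ ≠ 0 := sub_ne_zero.mpr (Ne.symm h)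
  have hD' : p₁ * u₂ - u₁ * p₂ ≠ 0 := by rwa [mul_comm u₁ p₂]
  simp only [a, b, b₁, b₀, S, P]
  field_simp
  ring
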